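/- arXiv:1702.05051 — 5 statements merged into one kernel-verified Lean document; each statement's English description precedes it below -/
import Mathlib

section
/- For every ordered tree of height h with at most ℓ leaves (ℓ ≥ 1), there exists an order-preserving relabelling (tree coding) of branching directions by finite binary strings, ordered as above, such that the resulting tree is isomorphic as an ordered tree to the original one, and for every leaf, the total number of bits used along the navigation path from the root to that leaf is at most ⌈lg ℓ⌉. -/
/-- The strict order on finite binary strings:
`0s < ε`, `ε < 1s`, `bs < bs' iff s < s'`, and `0s < 1s'`. -/
def bslt : List Bool → List Bool → Prop
  | [], [] => False
  | b :: _, [] => b = false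
  | [], b :: _ => b = true
  | a :: s, b :: t => (a = false ∧ b = true) ∨ (a = b ∧ bslt s t)

open Classical in
/-- The leaves of an ordered tree `T` (a prefix-closed finite set of sequences of
branching directions): the maximal nodes w.r.t. the prefix ordering. -/
noncomputable def leaves {D : Type*} (T : Finset (List D)) : Finset (List D) :=
  T.filter (fun p => ∀ d : D, p ++ [d] ∉ T)

/-- Total number of bits along the navigation path `p`, where the (adaptive) coding `c`
labels the branching direction `d` at node `q` by the binary string `c q d`. -/
def pathBits {D : Type*} (c : List D → D → List Bool) : List D → ℕ
  | [] => 0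
  | d :: rest => (c [] d).length + pathBits (fun q d' => c (d :: q) d') rest


lemma bslt_irrefl : ∀ s, ¬ bslt s s
  | [] => fun h => h
  | b :: s => fun h => by
      rcases h with ⟨h1, h2⟩ | ⟨_, h⟩
      · rw [h1] at h2; exact Bool.noConfusion h2
      · exact bslt_irrefl s h

lemma bslt_asymm : ∀ s t, bslt s t → bslt t s → False
  | [], [], h, _ => h
  | a :: s, [], h, h' => by
      simp only [bslt] at h h'; rw [h] at h'; exact Bool.noConfusion h'
  | [], b :: t, h, h' => by
      simp only [bslt] at h h'; rw [h] at h'; exact Bool.noConfusion h'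
  | a :: s, b :: t, h, h' => by
      rcases h with ⟨h1, h2⟩ | ⟨e, h⟩ <;> rcases h' with ⟨h1', h2'⟩ | ⟨e', hh⟩
      · rw [h1] at h2'; exact Bool.noConfusion h2'
      · subst e'; rw [h1] at h2; exact Bool.noConfusion h2
      · subst e; rw [h1'] at h2'; exact Bool.noConfusion h2'
      · exact bslt_asymm s t h hh

lemma bslt_false_nil (a : List Bool) : bslt (false :: a) [] := rfl
lemma bslt_nil_true (b : List Bool) : bslt [] (true :: b) := rfl
lemma bslt_false_true (a b : List Bool) : bslt (false :: a) (true :: b) := Or.inl ⟨rfl, rfl⟩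
lemma bslt_cons (c : Bool) {a b : List Bool} (h : bslt a b) : bslt (c :: a) (c :: b) :=
  Or.inr ⟨rfl, h⟩

lemma forall₂_append' {α β : Type*} {R : α → β → Prop} {l₁ r₁ l₂ r₂}
    (h : List.Forall₂ R l₁ l₂) (h' : List.Forall₂ R r₁ r₂) :
    List.Forall₂ R (l₁ ++ r₁) (l₂ ++ r₂) := by
  induction h with
  | nil => exact h'
  | cons ha _ ih => exact List.Forall₂.cons ha ih

lemma exists_split (t : ℕ) : ∀ ws : List ℕ, t < ws.sum →
    ∃ L w R, ws = L ++ w :: R ∧ L.sum ≤ t ∧ t < L.sum + w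
  | [], h => by simp at h
  | w :: ws, h => by
      by_cases hw : t < w
      · exact ⟨[], w, ws, rfl, Nat.zero_le t, by simpa using hw⟩
      · push_neg at hw
        have h2 : t - w < ws.sum := by
          simp only [List.sum_cons] at h; omega
        obtain ⟨L, w', R, he, h1, h3⟩ := exists_split (t - w) ws h2
        exact ⟨w :: L, w', R, by simp [he], by simp; omega, by simp; omega⟩

lemma codeAssign : ∀ m (ws : List ℕ), (∀ w ∈ ws, 1 ≤ w) → ws.sum ≤ 2 ^ m →
    ∃ ss : List (List Bool), ss.Pairwise bslt ∧
      List.Forall₂ (fun s w => s.length + Nat.clog 2 w ≤ m) ss ws := by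
  intro m
  induction m with
  | zero =>
    intro ws hpos hsum
    match ws, hpos, hsum with
    | [], _, _ => exact ⟨[], List.Pairwise.nil, List.Forall₂.nil⟩
    | [w], hpos, hsum =>
      have h1 : w = 1 := le_antisymm (by simpa using hsum) (hpos w (by simp))
      refine ⟨[[]], by simp, ?_⟩
      refine List.Forall₂.cons ?_ List.Forall₂.nil
      simp [h1, Nat.clog]
    | w :: w' :: ws, hpos, hsum =>
      exfalso
      have := hpos w (by simp); have := hpos w' (by simp)
      simp only [List.sum_cons, pow_zero] at hsum; omega
  | succ m ih =>
    intro ws hpos hsum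
    by_cases hs : ws.sum ≤ 2 ^ m
    · obtain ⟨ss, hp, hf⟩ := ih ws hpos hs
      exact ⟨ss, hp, hf.imp fun h => by omega⟩
    · push_neg at hs
      obtain ⟨L, w, R, he, h1, h2⟩ := exists_split (2 ^ m) ws hs
      subst he
      have hLsum : L.sum ≤ 2 ^ m := h1
      have hRsum : R.sum ≤ 2 ^ m := by
        have := hsum
        simp only [List.sum_append, List.sum_cons] at this
        have : L.sum + w + R.sum ≤ 2 ^ (m + 1) := by omega
        have h2m : 2 ^ (m + 1) = 2 ^ m + 2 ^ m := by ring
        omega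
      obtain ⟨ssL, hpL, hfL⟩ := ih L (fun x hx => hpos x (by simp [hx])) hLsum
      obtain ⟨ssR, hpR, hfR⟩ := ih R (fun x hx => hpos x (by simp [hx])) hRsum
      have hw : Nat.clog 2 w ≤ m + 1 := by
        have hwle : w ≤ 2 ^ (m + 1) := by
          have := hsum; simp only [List.sum_append, List.sum_cons] at this; omega
        calc Nat.clog 2 w ≤ Nat.clog 2 (2 ^ (m+1)) := Nat.clog_mono_right 2 hwle
          _ = m + 1 := Nat.clog_pow 2 (m+1) one_lt_two
      refine ⟨ssL.map (false :: ·) ++ [] :: ssR.map (true :: ·), ?_, ?_⟩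
      · rw [List.pairwise_append]
        refine ⟨hpL.map _ (fun a b h => bslt_cons false h), ?_, ?_⟩
        · rw [List.pairwise_cons]
          refine ⟨?_, hpR.map _ (fun a b h => bslt_cons true h)⟩
          intro s hs'
          obtain ⟨a, _, rfl⟩ := List.mem_map.1 hs'
          exact bslt_nil_true a
        · intro x hx y hy
          obtain ⟨a, _, rfl⟩ := List.mem_map.1 hx
          rcases List.mem_cons.1 hy with rfl | hy
          · exact bslt_false_nil a
          · obtain ⟨b, _, rfl⟩ := List.mem_map.1 hy
            exact bslt_false_true a b
      · refine forall₂_append' ?_ (List.Forall₂.cons (by simpa using hw) ?_)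
        · refine List.forall₂_map_left_iff.2 (hfL.imp ?_)
          intro a b h; simpa using by omega
        · refine List.forall₂_map_left_iff.2 (hfR.imp ?_)
          intro a b h; simpa using by omega

open Classical

noncomputable def subW {D : Type*} (T : Finset (List D)) (p : List D) : ℕ :=
  ((leaves T).filter (fun q => p <+: q)).card

section Tree
variable {D : Type*} [LinearOrder D] {T : Finset (List D)} {h : ℕ}

lemma exists_leaf_ext (hpref : ∀ p ∈ T, ∀ q : List D, q <+: p → q ∈ T)
    (hheight : ∀ p ∈ T, p.length ≤ h) :
    ∀ n (p : List D), p ∈ T → h - p.length ≤ n → ∃ q ∈ leaves T, p <+: q := by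
  intro n
  induction n with
  | zero =>
    intro p hp hn
    refine ⟨p, ?_, List.prefix_refl p⟩
    rw [leaves, Finset.mem_filter]
    refine ⟨hp, fun d hd => ?_⟩
    have := hheight _ hd
    simp only [List.length_append, List.length_singleton] at this
    have := hheight p hp
    omega
  | succ n ih =>
    intro p hp hn
    by_cases hleaf : p ∈ leaves T
    · exact ⟨p, hleaf, List.prefix_refl p⟩
    · rw [leaves, Finset.mem_filter] at hleaf
      push_neg at hleaf
      obtain ⟨d, hd⟩ := hleaf hp
      have hlen := hheight _ hd
      simp only [List.length_append, List.length_singleton] at hlen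
      obtain ⟨q, hq, hpq⟩ := ih (p ++ [d]) hd
        (by simp only [List.length_append, List.length_singleton]; omega)
      exact ⟨q, hq, (List.prefix_append p [d]).trans hpq⟩

lemma subW_eq {T : Finset (List D)} (p : List D) :
    subW T p = ((leaves T).filter (fun q => p <+: q)).card := by
  unfold subW; congr

lemma subW_pos (hpref : ∀ p ∈ T, ∀ q : List D, q <+: p → q ∈ T)
    (hheight : ∀ p ∈ T, p.length ≤ h) {p : List D} (hp : p ∈ T) : 1 ≤ subW T p := by
  obtain ⟨q, hq, hpq⟩ := exists_leaf_ext hpref hheight (h - p.length) p hp le_rfl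
  rw [subW_eq]
  exact Finset.card_pos.2 ⟨q, Finset.mem_filter.2 ⟨hq, hpq⟩⟩

lemma prefix_cases {p q : List D} (hpq : p <+: q) : q = p ∨ ∃ d, p ++ [d] <+: q := by
  obtain ⟨t, rfl⟩ := hpq
  match t with
  | [] => exact Or.inl (by simp)
  | d :: t' => exact Or.inr ⟨d, ⟨t', by simp⟩⟩

lemma subW_leaf (hpref : ∀ p ∈ T, ∀ q : List D, q <+: p → q ∈ T)
    {p : List D} (hp : p ∈ leaves T) : subW T p = 1 := by
  rw [subW_eq, Finset.card_eq_one]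
  refine ⟨p, ?_⟩
  ext q
  simp only [Finset.mem_filter, Finset.mem_singleton]
  constructor
  · rintro ⟨hq, hpq⟩
    rcases prefix_cases hpq with rfl | ⟨d, hd⟩
    · rfl
    · exfalso
      have hqT : q ∈ T := (Finset.mem_filter.1 hq).1
      have : p ++ [d] ∈ T := hpref q hqT _ hd
      exact (Finset.mem_filter.1 hp).2 d this
  · rintro rfl; exact ⟨hp, List.prefix_refl _⟩

lemma children_finite (p : List D) : {d : D | p ++ [d] ∈ T}.Finite := by
  have : {d : D | p ++ [d] ∈ T} = (fun d => p ++ [d]) ⁻¹' (T : Set (List D)) := rfl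
  rw [this]
  exact Set.Finite.preimage (fun a _ b _ hab => by simpa using hab) T.finite_toSet

lemma sum_children_le (p : List D) :
    ∑ d ∈ (children_finite (T := T) p).toFinset, subW T (p ++ [d]) ≤ subW T p := by
  classical
  set C := (children_finite (T := T) p).toFinset
  have hdisj : (C : Set D).Pairwise fun d d' =>
      Disjoint ((leaves T).filter (fun q => p ++ [d] <+: q))
        ((leaves T).filter (fun q => p ++ [d'] <+: q)) := by
    intro d _ d' _ hne
    rw [Finset.disjoint_left]
    intro q hq hq'
    have h1 := (Finset.mem_filter.1 hq).2
    have h2 := (Finset.mem_filter.1 hq').2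
    apply hne
    have e1 : p ++ [d] = q.take (p.length + 1) := by
      rw [List.prefix_iff_eq_take.1 h1]; simp
    have e2 : p ++ [d'] = q.take (p.length + 1) := by
      rw [List.prefix_iff_eq_take.1 h2]; simp
    have := e1.trans e2.symm
    simpa using this
  calc ∑ d ∈ C, subW T (p ++ [d])
      = (C.biUnion fun d => (leaves T).filter (fun q => p ++ [d] <+: q)).card := by
        simp only [subW_eq]
        exact (Finset.card_biUnion hdisj).symm
    _ ≤ subW T p := by
        rw [subW_eq]
        apply Finset.card_le_card
        intro q hq
        obtain ⟨d, _, hd⟩ := Finset.mem_biUnion.1 hq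
        rw [Finset.mem_filter] at hd ⊢
        exact ⟨hd.1, ((p.prefix_append [d]).trans hd.2)⟩

lemma node_code (hpref : ∀ p ∈ T, ∀ q : List D, q <+: p → q ∈ T)
    (hheight : ∀ p ∈ T, p.length ≤ h) (p : List D) :
    ∃ f : D → List Bool,
      (∀ d d', p ++ [d] ∈ T → p ++ [d'] ∈ T → (d < d' ↔ bslt (f d) (f d'))) ∧
      (∀ d, p ++ [d] ∈ T →
        (f d).length + Nat.clog 2 (subW T (p ++ [d])) ≤ Nat.clog 2 (subW T p)) := by
  classical
  set C := (children_finite (T := T) p).toFinset with hC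
  have hmemC : ∀ d, d ∈ C ↔ p ++ [d] ∈ T := by
    intro d; rw [hC, Set.Finite.mem_toFinset]; rfl
  set ds := C.sort (· ≤ ·) with hds
  have hmem : ∀ d, d ∈ ds ↔ p ++ [d] ∈ T := by
    intro d; rw [hds, Finset.mem_sort]; exact hmemC d
  set ws := ds.map (fun d => subW T (p ++ [d])) with hws
  have hsum : ws.sum ≤ 2 ^ Nat.clog 2 (subW T p) := by
    have h1 : ws.sum = ∑ d ∈ C, subW T (p ++ [d]) := by
      rw [hws, ← Finset.sum_map_toList]
      exact List.Perm.sum_eq ((C.sort_perm_toList (· ≤ ·)).map _)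
    rw [h1]
    exact le_trans (sum_children_le p) (Nat.le_pow_clog one_lt_two _)
  obtain ⟨ss, hpw, hfa⟩ := codeAssign (Nat.clog 2 (subW T p)) ws
    (by
      intro w hw
      rw [hws, List.mem_map] at hw
      obtain ⟨d, hd, rfl⟩ := hw
      exact subW_pos hpref hheight ((hmem d).1 hd)) hsum
  rw [hws] at hfa
  have hlen : ss.length = ds.length := by
    have := hfa.length_eq; simpa using this
  refine ⟨fun d => ss.getD (ds.idxOf d) [], ?_, ?_⟩
  · intro d d' hd hd'
    have hdm : d ∈ ds := (hmem d).2 hd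
    have hdm' : d' ∈ ds := (hmem d').2 hd'
    have hi : ds.idxOf d < ds.length := List.idxOf_lt_length_iff.2 hdm
    have hi' : ds.idxOf d' < ds.length := List.idxOf_lt_length_iff.2 hdm'
    have hgetd : ds.get ⟨ds.idxOf d, hi⟩ = d := List.idxOf_get hi
    have hgetd' : ds.get ⟨ds.idxOf d', hi'⟩ = d' := List.idxOf_get hi'
    have hsort : ds.Pairwise (· < ·) := (Finset.sortedLT_sort C).pairwise
    have hmono := (Finset.sortedLT_sort C).strictMono_get
    have hlt : ∀ (a b : D) (ha : a ∈ ds) (hb : b ∈ ds),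
        a < b ↔ ds.idxOf a < ds.idxOf b := by
      intro a b ha hb
      have hia : ds.idxOf a < ds.length := List.idxOf_lt_length_iff.2 ha
      have hib : ds.idxOf b < ds.length := List.idxOf_lt_length_iff.2 hb
      have hga : ds.get ⟨ds.idxOf a, hia⟩ = a := List.idxOf_get hia
      have hgb : ds.get ⟨ds.idxOf b, hib⟩ = b := List.idxOf_get hib
      conv_lhs => rw [← hga, ← hgb]
      rw [hmono.lt_iff_lt]
      exact Iff.rfl
    have hbs : ∀ i j : ℕ, i < ds.length → j < ds.length → i < j →
        bslt (ss.getD i []) (ss.getD j []) := by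
      intro i j hiL hjL hij
      rw [List.getD_eq_getElem _ _ (by omega : i < ss.length),
        List.getD_eq_getElem _ _ (by omega : j < ss.length)]
      exact List.pairwise_iff_get.1 hpw ⟨i, by omega⟩ ⟨j, by omega⟩ hij
    constructor
    · intro hdd'
      exact hbs _ _ hi hi' ((hlt d d' hdm hdm').1 hdd')
    · intro hb
      rcases lt_trichotomy d d' with h1 | rfl | h3
      · exact h1
      · exact absurd hb (bslt_irrefl _)
      · exact absurd (hbs _ _ hi' hi ((hlt d' d hdm' hdm).1 h3))
          (fun hb' => bslt_asymm _ _ hb hb')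
  · intro d hd
    have hdm : d ∈ ds := (hmem d).2 hd
    have hi : ds.idxOf d < ds.length := List.idxOf_lt_length_iff.2 hdm
    have hgetd : ds.get ⟨ds.idxOf d, hi⟩ = d := List.idxOf_get hi
    show (ss.getD (ds.idxOf d) []).length + Nat.clog 2 (subW T (p ++ [d])) ≤
      Nat.clog 2 (subW T p)
    have h2 := (List.forall₂_iff_get.1 hfa).2 (ds.idxOf d) (by omega) (by simpa using hi)
    simp only [List.get_eq_getElem, List.getElem_map, (hgetd : ds[ds.idxOf d] = d)] at h2
    rw [List.getD_eq_getElem _ _ (by omega : ds.idxOf d < ss.length)]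
    simpa using h2

lemma pathBits_le (hpref : ∀ p ∈ T, ∀ q : List D, q <+: p → q ∈ T)
    (c : List D → D → List Bool)
    (hc : ∀ p d, p ++ [d] ∈ T →
      (c p d).length + Nat.clog 2 (subW T (p ++ [d])) ≤ Nat.clog 2 (subW T p)) :
    ∀ (q r : List D), r ++ q ∈ T →
      pathBits (fun q' => c (r ++ q')) q + Nat.clog 2 (subW T (r ++ q)) ≤
        Nat.clog 2 (subW T r) := by
  intro q
  induction q with
  | nil => intro r hr; simp [pathBits]
  | cons d rest ih =>
    intro r hr
    have h1 : r ++ [d] ∈ T := hpref _ hr _ ⟨rest, by simp⟩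
    have h2 := hc r d h1
    have h3 : (r ++ [d]) ++ rest ∈ T := by simpa using hr
    have h4 := ih (r ++ [d]) h3
    have hunfold : pathBits (fun q' => c (r ++ q')) (d :: rest)
        = (c r d).length + pathBits (fun q' => c ((r ++ [d]) ++ q')) rest := by
      show (c (r ++ []) d).length + pathBits (fun q' d' => c (r ++ d :: q') d') rest = _
      rw [List.append_nil]
      have he : (fun q' d' => c (r ++ d :: q') d') = (fun q' => c ((r ++ [d]) ++ q')) := by
        funext q'
        congr 1
        simp
      rw [he]
    rw [hunfold]
    simp only [List.append_assoc, List.singleton_append] at h4 ⊢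
    omega

end Tree

theorem succinct_tree_coding' {D : Type*} [LinearOrder D] (h ℓ : ℕ) (hℓ : 1 ≤ ℓ)
    (T : Finset (List D)) (hroot : ([] : List D) ∈ T)
    (hpref : ∀ p ∈ T, ∀ q : List D, q <+: p → q ∈ T)
    (hheight : ∀ p ∈ T, p.length ≤ h)
    (hleaves : (leaves T).card ≤ ℓ) :
    ∃ c : List D → D → List Bool,
      (∀ p ∈ T, ∀ d d' : D, p ++ [d] ∈ T → p ++ [d'] ∈ T →
        (d < d' ↔ bslt (c p d) (c p d'))) ∧
      (∀ p ∈ leaves T, pathBits c p ≤ Nat.clog 2 ℓ) := by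
  choose f hf1 hf2 using fun p => node_code (h := h) (T := T) hpref hheight p
  refine ⟨f, fun p _ d d' hd hd' => hf1 p d d' hd hd', ?_⟩
  intro p hp
  have hpT : p ∈ T := by
    rw [leaves, Finset.mem_filter] at hp; exact hp.1
  have hkey := pathBits_le hpref f (fun p d hd => hf2 p d hd) p [] (by simpa using hpT)
  have hfe : (fun q' => f ([] ++ q')) = f := by funext q'; simp
  rw [hfe] at hkey
  have h1 : subW T p = 1 := subW_leaf hpref hp
  have h2 : subW T ([] : List D) ≤ ℓ := by
    rw [subW_eq]
    exact le_trans (Finset.card_le_card (Finset.filter_subset _ _)) hleaves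
  simp only [List.nil_append, h1, Nat.clog_one_right, Nat.add_zero] at hkey
  exact le_trans hkey (Nat.clog_mono_right 2 h2)

/-- **Succinct tree coding.** For every ordered tree of height `h` with at most `ℓ ≥ 1`
leaves there is an adaptive order-preserving relabelling of branching directions by
finite binary strings (so the recoded tree is isomorphic as an ordered tree to the
original one), such that every navigation path to a leaf uses at most `⌈lg ℓ⌉` bits
in total. -/
theorem succinct_tree_coding {D : Type*} [LinearOrder D] (h ℓ : ℕ) (hℓ : 1 ≤ ℓ)
    (T : Finset (List D)) (hroot : ([] : List D) ∈ T)
    (hpref : ∀ p ∈ T, ∀ q : List D, q <+: p → q ∈ T)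
    (hheight : ∀ p ∈ T, p.length ≤ h)
    (hleaves : (leaves T).card ≤ ℓ) :
    ∃ c : List D → D → List Bool,
      (∀ p ∈ T, ∀ d d' : D, p ++ [d] ∈ T → p ++ [d'] ∈ T →
        (d < d' ↔ bslt (c p d) (c p d'))) ∧
      (∀ p ∈ leaves T, pathBits c p ≤ Nat.clog 2 ℓ) := by
  exact succinct_tree_coding' h ℓ hℓ T hroot hpref hheight hleaves
end

section
/- If 0 < p < 1 and pk is a positive integer with pk < k, then 2^{k·H(p)} / √(8·p·(1−p)·k) ≤ C(k, pk) ≤ 2^{k·H(p)} / √(2π·p·(1−p)·k), where H(p) = −p·lg p − (1−p)·lg(1−p). -/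
/-- The binary entropy function `H(p) = −p·lg p − (1−p)·lg(1−p)` (lg = log base 2). -/
noncomputable def binEnt (p : ℝ) : ℝ :=
  -(p * Real.logb 2 p) - (1 - p) * Real.logb 2 (1 - p)

section AshAux
open Real Filter Nat

lemma sqrtPi_le_stirling (n : ℕ) : Real.sqrt π ≤ Stirling.stirlingSeq (n + 1) :=
  Stirling.stirlingSeq'_antitone.le_of_tendsto
    (Stirling.tendsto_stirlingSeq_sqrt_pi.comp (tendsto_add_atTop_nat 1)) n

lemma stirling_diff_le (n : ℕ) :
    Real.log (Stirling.stirlingSeq (n + 1)) - Real.log (Stirling.stirlingSeq (n + 2)) ≤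
      1 / (12 * (n + 1 : ℝ) * (n + 2 : ℝ)) := by
  have hx : (0:ℝ) < 2 * ((n:ℝ) + 1) + 1 := by positivity
  set x : ℝ := (1 / (2 * ((n:ℕ)+1 : ℕ) + 1) : ℝ) ^ 2 with hxdef
  have hx0 : (0:ℝ) ≤ x := sq_nonneg _
  have hx1 : x < 1 := by
    rw [hxdef]
    push_cast
    rw [div_pow, one_pow, div_lt_one (by positivity)]
    nlinarith [n.cast_nonneg (α := ℝ)]
  have g : HasSum (fun k : ℕ => (1:ℝ)/3 * x ^ (k+1))
      (1/3 * (x / (1 - x))) := by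
    have := (hasSum_geometric_of_lt_one hx0 hx1).mul_left x
    simp_rw [← _root_.pow_succ'] at this
    exact this.mul_left (1/3)
  have hab : ∀ k : ℕ, (1 : ℝ) / (2 * ↑(k + 1) + 1) * ((1 / (2 * ↑(n + 1) + 1)) ^ 2) ^ (k + 1) ≤
      (1:ℝ)/3 * x ^ (k+1) := by
    intro k
    have h1 : (1 : ℝ) / (2 * ↑(k + 1) + 1) ≤ 1/3 := by
      rw [div_le_div_iff₀ (by positivity) (by norm_num)]
      push_cast; nlinarith [k.cast_nonneg (α := ℝ)]
    exact mul_le_mul_of_nonneg_right h1 (pow_nonneg hx0 _)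
  have h := hasSum_le hab (Stirling.log_stirlingSeq_diff_hasSum n) g
  refine h.trans (le_of_eq ?_)
  have h1x : (0:ℝ) < 1 - x := by linarith
  rw [hxdef]
  push_cast
  rw [div_pow, one_pow, eq_div_iff (by positivity)]
  have hd : (0:ℝ) < (2 * ((n:ℝ) + 1) + 1) ^ 2 := by positivity
  have hd2 : (1:ℝ) - 1 / (2 * ((n:ℝ) + 1) + 1) ^ 2 ≠ 0 := by
    rw [hxdef] at h1x; push_cast at h1x; rw [div_pow, one_pow] at h1x; linarith
  have h24 : (24 + (n:ℝ)*36 + (n:ℝ)^2*12) ≠ 0 := by positivity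
  field_simp
  rw [div_eq_iff (by ring_nf; positivity)]
  ring

lemma stirling_le_sqrtPi_exp (n : ℕ) :
    Stirling.stirlingSeq (n + 1) ≤ Real.sqrt π * Real.exp (1 / (12 * (n + 1 : ℝ))) := by
  have key : ∀ N : ℕ, n ≤ N → Real.log (Stirling.stirlingSeq (n + 1)) ≤
      Real.log (Stirling.stirlingSeq (N + 1)) + (1 / (12 * (n + 1 : ℝ)) - 1 / (12 * (N + 1 : ℝ))) := by
    intro N hN
    induction N, hN using Nat.le_induction with
    | base => simp
    | succ N hN ih =>
      have hd := stirling_diff_le N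
      have : Real.log (Stirling.stirlingSeq (N + 1)) ≤
          Real.log (Stirling.stirlingSeq (N + 2)) + (1 / (12 * (N + 1 : ℝ)) - 1 / (12 * (N + 2 : ℝ))) := by
        have he : 1 / (12 * (N + 1 : ℝ) * (N + 2 : ℝ)) =
            1 / (12 * (N + 1 : ℝ)) - 1 / (12 * (N + 2 : ℝ)) := by
          field_simp
          ring
        linarith [he ▸ hd]
      have hsh : N + 1 + 1 = N + 2 := by omega
      rw [hsh]
      push_cast at ih this ⊢
      have h3 : ((N:ℝ) + 1 + 1 : ℝ) = (N:ℝ) + 2 := by ring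
      rw [h3]
      linarith
  have hlim : Filter.Tendsto
      (fun N : ℕ => Real.log (Stirling.stirlingSeq (N + 1)) +
        (1 / (12 * (n + 1 : ℝ)) - 1 / (12 * (N + 1 : ℝ)))) atTop
      (nhds (Real.log (Real.sqrt π) + (1 / (12 * (n + 1 : ℝ)) - 0))) := by
    apply Filter.Tendsto.add
    · exact ((Real.continuousAt_log (ne_of_gt (Real.sqrt_pos.2 Real.pi_pos))).tendsto.comp
        (Stirling.tendsto_stirlingSeq_sqrt_pi.comp (tendsto_add_atTop_nat 1)))
    · apply Filter.Tendsto.sub tendsto_const_nhds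
      have : Filter.Tendsto (fun N : ℕ => 12 * (N + 1 : ℝ)) atTop atTop := by
        apply Filter.Tendsto.const_mul_atTop (by norm_num)
        exact Filter.tendsto_atTop_add_const_right _ _ tendsto_natCast_atTop_atTop
      have h0 := this.inv_tendsto_atTop
      simp only [one_div]
      exact h0
  have hle : Real.log (Stirling.stirlingSeq (n + 1)) ≤
      Real.log (Real.sqrt π) + (1 / (12 * (n + 1 : ℝ)) - 0) :=
    ge_of_tendsto hlim (Filter.eventually_atTop.2 ⟨n, key⟩)
  rw [sub_zero] at hle
  calc Stirling.stirlingSeq (n + 1)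
      = Real.exp (Real.log (Stirling.stirlingSeq (n + 1))) :=
        (Real.exp_log (Stirling.stirlingSeq'_pos n)).symm
    _ ≤ Real.exp (Real.log (Real.sqrt π) + 1 / (12 * (n + 1 : ℝ))) := Real.exp_le_exp.2 hle
    _ = Real.sqrt π * Real.exp (1 / (12 * (n + 1 : ℝ))) := by
        rw [Real.exp_add, Real.exp_log (Real.sqrt_pos.2 Real.pi_pos)]

lemma stirling_two : Stirling.stirlingSeq 2 = Real.exp 1 ^ 2 / 4 := by
  have h4 : Real.sqrt (2 * (2:ℕ)) = 2 := by
    rw [show (2 * ((2:ℕ):ℝ)) = 2 ^ 2 by norm_num]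
    exact Real.sqrt_sq (by norm_num)
  rw [Stirling.stirlingSeq, h4]
  rw [Nat.factorial_two]
  rw [div_pow]
  have he : Real.exp 1 ≠ 0 := Real.exp_ne_zero 1
  field_simp
  ring

lemma stirling_three : Stirling.stirlingSeq 3 = Real.sqrt 6 * Real.exp 1 ^ 3 / 27 := by
  have h6 : (0:ℝ) < Real.sqrt 6 := Real.sqrt_pos.2 (by norm_num)
  have h6' : Real.sqrt 6 * Real.sqrt 6 = 6 := Real.mul_self_sqrt (by norm_num)
  rw [Stirling.stirlingSeq]
  rw [show (2 * ((3:ℕ):ℝ)) = 6 by norm_num]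
  rw [show (3:ℕ)! = 6 from rfl]
  rw [div_pow]
  have he : Real.exp 1 ≠ 0 := Real.exp_ne_zero 1
  rw [div_eq_div_iff (by positivity) (by norm_num)]
  push_cast
  have h : Real.sqrt 6 * Real.exp 1 ^ 3 * (Real.sqrt 6 * ((3:ℝ) ^ 3 / Real.exp 1 ^ 3)) =
      (Real.sqrt 6 * Real.sqrt 6) * 27 := by
    field_simp
    nlinarith [h6', Real.exp_pos 3]
  rw [h, h6']

lemma exp_ninth_sqrtPi_le : Real.exp (1/9) * Real.sqrt π ≤ 2 := by
  have h18 : Real.exp (1/18 : ℝ) ≤ 18/17 := by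
    have h := Real.add_one_le_exp (-(1/18) : ℝ)
    rw [Real.exp_neg] at h
    have hp : (0:ℝ) < Real.exp (1/18) := Real.exp_pos _
    have h17 : (17/18 : ℝ) ≤ (Real.exp (1/18))⁻¹ := by linarith
    calc Real.exp (1/18:ℝ) = (Real.exp (1/18))⁻¹⁻¹ := (inv_inv _).symm
      _ ≤ (17/18 : ℝ)⁻¹ := inv_anti₀ (by norm_num) h17
      _ = 18/17 := by norm_num
  have h29 : Real.exp (2/9 : ℝ) ≤ (18/17 : ℝ)^4 := by
    have : Real.exp (2/9 : ℝ) = Real.exp (1/18 : ℝ) ^ 4 := by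
      rw [← Real.exp_nat_mul]
      norm_num
    rw [this]
    exact pow_le_pow_left₀ (Real.exp_pos _).le h18 4
  have hpi : π ≤ 3.15 := Real.pi_lt_d2.le
  have hsq : (Real.exp (1/9) * Real.sqrt π) ^ 2 ≤ 4 := by
    have : (Real.exp (1/9) * Real.sqrt π) ^ 2 = Real.exp (2/9) * π := by
      rw [mul_pow, Real.sq_sqrt Real.pi_pos.le, ← Real.exp_nat_mul]
      · norm_num
    rw [this]
    calc Real.exp (2/9) * π ≤ (18/17:ℝ)^4 * 3.15 := by
          apply mul_le_mul h29 hpi Real.pi_pos.le (by positivity)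
      _ ≤ 4 := by norm_num
  nlinarith [mul_nonneg (Real.exp_pos (1/9:ℝ)).le (Real.sqrt_nonneg π)]

lemma stirling_pos' (n : ℕ) (hn : 1 ≤ n) : 0 < Stirling.stirlingSeq n := by
  obtain ⟨j, rfl⟩ := Nat.exists_eq_add_of_le hn
  rw [add_comm]
  exact Stirling.stirlingSeq'_pos j

lemma sqrtPi_le' (n : ℕ) (hn : 1 ≤ n) : Real.sqrt π ≤ Stirling.stirlingSeq n := by
  obtain ⟨j, rfl⟩ := Nat.exists_eq_add_of_le hn
  rw [add_comm]
  exact sqrtPi_le_stirling j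

lemma stirling_le' (n : ℕ) (hn : 1 ≤ n) :
    Stirling.stirlingSeq n ≤ Real.sqrt π * Real.exp (1 / (12 * (n : ℝ))) := by
  obtain ⟨j, rfl⟩ := Nat.exists_eq_add_of_le hn
  rw [add_comm]
  have := stirling_le_sqrtPi_exp j
  push_cast at this ⊢
  convert this using 4

lemma stirling_anti (a b : ℕ) (ha : 1 ≤ a) (hab : a ≤ b) :
    Stirling.stirlingSeq b ≤ Stirling.stirlingSeq a := by
  obtain ⟨i, rfl⟩ := Nat.exists_eq_add_of_le ha
  obtain ⟨j, hj⟩ := Nat.exists_eq_add_of_le hab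
  subst hj
  have := Stirling.stirlingSeq'_antitone (a := i) (b := i + j) (Nat.le_add_right i j)
  simpa [Function.comp, Nat.succ_eq_add_one, add_comm, add_assoc, add_left_comm] using this

lemma key_gen (a b : ℕ) (ha : 1 ≤ a) (hb : 1 ≤ b)
    (h : 1 / (12 * (a:ℝ)) + 1 / (12 * (b:ℝ)) ≤ 1/9) :
    Stirling.stirlingSeq a * Stirling.stirlingSeq b ≤ 2 * Stirling.stirlingSeq (a + b) := by
  have hpa := stirling_pos' a ha
  have hpb := stirling_pos' b hb
  have hsp : (0:ℝ) ≤ Real.sqrt π := Real.sqrt_nonneg π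
  calc Stirling.stirlingSeq a * Stirling.stirlingSeq b
      ≤ (Real.sqrt π * Real.exp (1 / (12 * (a:ℝ)))) *
        (Real.sqrt π * Real.exp (1 / (12 * (b:ℝ)))) := by
        apply mul_le_mul (stirling_le' a ha) (stirling_le' b hb) hpb.le (by positivity)
    _ = Real.sqrt π * Real.sqrt π * Real.exp (1 / (12 * (a:ℝ)) + 1 / (12 * (b:ℝ))) := by
        rw [Real.exp_add]; ring
    _ ≤ Real.sqrt π * Real.sqrt π * Real.exp (1/9) := by
        have := Real.exp_le_exp.2 h
        nlinarith [Real.exp_pos (1 / (12 * (a:ℝ)) + 1 / (12 * (b:ℝ)))]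
    _ = Real.sqrt π * (Real.exp (1/9) * Real.sqrt π) := by ring
    _ ≤ Real.sqrt π * 2 := by
        exact mul_le_mul_of_nonneg_left exp_ninth_sqrtPi_le hsp
    _ ≤ 2 * Stirling.stirlingSeq (a + b) := by
        rw [mul_comm]
        have := sqrtPi_le' (a + b) (by omega)
        linarith

lemma key_lower (a b : ℕ) (ha : 1 ≤ a) (hb : 1 ≤ b) :
    Stirling.stirlingSeq a * Stirling.stirlingSeq b ≤ 2 * Stirling.stirlingSeq (a + b) := by
  wlog hab : a ≤ b generalizing a b
  · rw [mul_comm, add_comm]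
    exact this b a hb ha (le_of_not_ge hab)
  have h2 : Real.sqrt 2 * Real.sqrt 2 = 2 := Real.mul_self_sqrt (by norm_num)
  have h2p : (0:ℝ) < Real.sqrt 2 := Real.sqrt_pos.2 (by norm_num)
  have hep := Real.exp_pos 1
  by_cases ha2 : 2 ≤ a
  · apply key_gen a b ha hb
    have hb2 : 2 ≤ b := le_trans ha2 hab
    have h1 : 1 / (12 * (a:ℝ)) ≤ 1/24 := by
      rw [div_le_div_iff₀ (by positivity) (by norm_num)]
      have : (2:ℝ) ≤ a := by exact_mod_cast ha2
      linarith
    have h2' : 1 / (12 * (b:ℝ)) ≤ 1/24 := by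
      rw [div_le_div_iff₀ (by positivity) (by norm_num)]
      have : (2:ℝ) ≤ b := by exact_mod_cast hb2
      linarith
    linarith
  · have ha1 : a = 1 := by omega
    subst ha1
    by_cases hb3 : 3 ≤ b
    · apply key_gen 1 b le_rfl hb
      have h1 : 1 / (12 * (b:ℝ)) ≤ 1/36 := by
        rw [div_le_div_iff₀ (by positivity) (by norm_num)]
        have : (3:ℝ) ≤ b := by exact_mod_cast hb3
        linarith
      have hbp : (0:ℝ) < (b:ℝ) := by positivity
      simp only [Nat.cast_one, mul_one]
      linarith
    · interval_cases b
      · -- b = 1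
        rw [Stirling.stirlingSeq_one, show (1+1 : ℕ) = 2 from rfl, stirling_two]
        rw [_root_.div_mul_div_comm, h2]
        rw [div_le_iff₀ (by norm_num)]
        nlinarith [hep]
      · -- b = 2
        rw [Stirling.stirlingSeq_one, stirling_two, show (1+2 : ℕ) = 3 from rfl, stirling_three]
        rw [_root_.div_mul_div_comm]
        rw [div_le_iff₀ (by positivity)]
        have h6 : Real.sqrt 6 * Real.sqrt 6 = 6 := Real.mul_self_sqrt (by norm_num)
        have h6p : (0:ℝ) < Real.sqrt 6 := Real.sqrt_pos.2 (by norm_num)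
        have h3 : Real.sqrt 3 * Real.sqrt 3 = 3 := Real.mul_self_sqrt (by norm_num)
        have h3p : (0:ℝ) < Real.sqrt 3 := Real.sqrt_pos.2 (by norm_num)
        have h27 : (27:ℝ) ≤ 16 * Real.sqrt 3 := by nlinarith
        have h26 : Real.sqrt 2 * Real.sqrt 6 = 2 * Real.sqrt 3 := by
          rw [← Real.sqrt_mul (by norm_num), show (2*6:ℝ) = 2^2*3 by norm_num,
            Real.sqrt_mul (by positivity), Real.sqrt_sq (by norm_num)]
        nlinarith [pow_pos hep 3]

lemma key_upper (a b : ℕ) (ha : 1 ≤ a) (hb : 1 ≤ b) :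
    Real.sqrt π * Stirling.stirlingSeq (a + b) ≤
      Stirling.stirlingSeq a * Stirling.stirlingSeq b := by
  have h1 : Stirling.stirlingSeq (a + b) ≤ Stirling.stirlingSeq b :=
    stirling_anti b (a+b) hb (Nat.le_add_left b a)
  have h2 : Real.sqrt π ≤ Stirling.stirlingSeq a := sqrtPi_le' a ha
  have h3 : 0 < Stirling.stirlingSeq (a + b) := stirling_pos' _ (by omega)
  have h4 : (0:ℝ) ≤ Real.sqrt π := Real.sqrt_nonneg π
  nlinarith [stirling_pos' b hb]

lemma factorial_eq (n : ℕ) (hn : 1 ≤ n) :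
    (n ! : ℝ) = Stirling.stirlingSeq n *
      (Real.sqrt (2 * n) * ((n : ℝ) / Real.exp 1) ^ n) := by
  rw [Stirling.stirlingSeq]
  have hn0 : (0:ℝ) < n := by exact_mod_cast hn
  have h1 : Real.sqrt (2 * (n:ℝ)) ≠ 0 := by positivity
  have h2 : ((n:ℝ) / Real.exp 1) ^ n ≠ 0 := by positivity
  field_simp

/-- **Ash's Lemma 4.7.1.** If `0 < p < 1` and `pk` is a positive integer `m` (with
`m < k` automatic), then
`2^{k·H(p)} / √(8·p·(1−p)·k) ≤ C(k, m) ≤ 2^{k·H(p)} / √(2π·p·(1−p)·k)`. -/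
theorem ash_binomial_estimate (k m : ℕ) (p : ℝ) (hp0 : 0 < p) (hp1 : p < 1)
    (hk : 0 < k) (hm : (m : ℝ) = p * k) :
    (2 : ℝ) ^ ((k : ℝ) * binEnt p) / Real.sqrt (8 * p * (1 - p) * k)
        ≤ (Nat.choose k m : ℝ) ∧
    (Nat.choose k m : ℝ)
        ≤ (2 : ℝ) ^ ((k : ℝ) * binEnt p) / Real.sqrt (2 * Real.pi * p * (1 - p) * k) := by
  have hq0 : 0 < 1 - p := by linarith
  have hk0 : (0:ℝ) < k := by exact_mod_cast hk
  have hm1 : 1 ≤ m := by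
    rcases Nat.eq_zero_or_pos m with h | h
    · exfalso; rw [h] at hm; push_cast at hm; nlinarith
    · exact h
  have hmk : m < k := by
    have : (m:ℝ) < k := by rw [hm]; nlinarith
    exact_mod_cast this
  set b := k - m with hbdef
  have hb1 : 1 ≤ b := by omega
  have hkab : k = m + b := by omega
  have hbr : (b:ℝ) = (1 - p) * k := by
    have : (b:ℝ) = (k:ℝ) - m := by
      rw [hbdef]; push_cast [Nat.cast_sub hmk.le]; ring
    rw [this, hm]; ring
  have hm0 : (0:ℝ) < m := by exact_mod_cast hm1
  have hb0 : (0:ℝ) < b := by exact_mod_cast hb1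
  have he : (0:ℝ) < Real.exp 1 := Real.exp_pos 1
  -- entropy identity
  have hpm : p = (m:ℝ) / k := by rw [hm]; field_simp
  have hpb : 1 - p = (b:ℝ) / k := by rw [hbr]; field_simp
  set Q : ℝ := (k:ℝ)^k / ((m:ℝ)^m * (b:ℝ)^b) with hQdef
  have hQpos : 0 < Q := by rw [hQdef]; positivity
  have hQ : (2 : ℝ) ^ ((k : ℝ) * binEnt p) = Q := by
    have hE : (k:ℝ) * binEnt p
        = -(Real.logb 2 p * (m:ℝ) + Real.logb 2 (1-p) * (b:ℝ)) := by
      rw [binEnt, hm, hbr]; ring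
    rw [hE, Real.rpow_neg (by norm_num), Real.rpow_add two_pos,
      Real.rpow_mul (by norm_num), Real.rpow_mul (by norm_num),
      Real.rpow_logb two_pos (by norm_num) hp0,
      Real.rpow_logb two_pos (by norm_num) hq0,
      Real.rpow_natCast, Real.rpow_natCast, hQdef, hpb, hpm,
      div_pow, div_pow]
    rw [_root_.div_mul_div_comm, ← pow_add, ← hkab, inv_div]
  -- the key identity
  set A := Stirling.stirlingSeq m with hA
  set B := Stirling.stirlingSeq b with hB
  set K := Stirling.stirlingSeq k with hK
  have hApos : 0 < A := stirling_pos' m hm1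
  have hBpos : 0 < B := stirling_pos' b hb1
  have hKpos : 0 < K := stirling_pos' k hk
  set Fa : ℝ := Real.sqrt (2 * m) * ((m : ℝ) / Real.exp 1) ^ m with hFa
  set Fb : ℝ := Real.sqrt (2 * b) * ((b : ℝ) / Real.exp 1) ^ b with hFb
  set Fk : ℝ := Real.sqrt (2 * k) * ((k : ℝ) / Real.exp 1) ^ k with hFk
  have hFapos : 0 < Fa := by rw [hFa]; positivity
  have hFbpos : 0 < Fb := by rw [hFb]; positivity
  set sX : ℝ := Real.sqrt (p * (1 - p) * k) with hsX
  have hsXpos : 0 < sX := by rw [hsX]; positivity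
  have hfac : (k.choose m : ℝ) * ((m ! : ℕ) : ℝ) * ((b ! : ℕ) : ℝ) = ((k ! : ℕ) : ℝ) := by
    exact_mod_cast congrArg (Nat.cast (R := ℝ))
      (Nat.choose_mul_factorial_mul_factorial hmk.le)
  have hfac2 : (k.choose m : ℝ) * (A * Fa) * (B * Fb) = K * Fk := by
    rw [← factorial_eq m hm1, ← factorial_eq b hb1, ← factorial_eq k (by omega)]
    exact hfac
  have e2 : Fk * (Real.sqrt 2 * sX) = Q * (Fa * Fb) := by
    have s1 : Real.sqrt (2 * (m:ℝ)) * Real.sqrt (2 * (b:ℝ))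
        = 2 * (sX * Real.sqrt k) := by
      rw [← Real.sqrt_mul (by positivity)]
      rw [show (2 * (m:ℝ)) * (2 * (b:ℝ)) = 2^2 * ((p * (1-p) * k) * k) by
        rw [hm, hbr]; ring]
      rw [Real.sqrt_mul (by positivity), Real.sqrt_sq (by norm_num),
        Real.sqrt_mul (by positivity), hsX]
    have s2 : Real.sqrt (2 * (k:ℝ)) * (Real.sqrt 2 * sX)
        = 2 * (sX * Real.sqrt k) := by
      rw [Real.sqrt_mul (by norm_num)]
      have h22 : Real.sqrt 2 * Real.sqrt 2 = 2 := Real.mul_self_sqrt (by norm_num)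
      linear_combination (Real.sqrt (k:ℝ) * sX) * h22
    have s3 : Q * (((m:ℝ) / Real.exp 1) ^ m * ((b:ℝ) / Real.exp 1) ^ b)
        = ((k:ℝ) / Real.exp 1) ^ k := by
      rw [hQdef, div_pow, div_pow, div_pow]
      have hkpow : (Real.exp 1)^k = (Real.exp 1)^m * (Real.exp 1)^b := by
        rw [hkab, pow_add]
      rw [_root_.div_mul_div_comm, _root_.div_mul_div_comm,
        div_eq_div_iff (by positivity) (by positivity), hkpow]
      ring
    rw [hFk, hFa, hFb]
    calc Real.sqrt (2 * (k:ℝ)) * ((k:ℝ) / Real.exp 1) ^ k * (Real.sqrt 2 * sX)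
        = (Real.sqrt (2 * (k:ℝ)) * (Real.sqrt 2 * sX)) * ((k:ℝ) / Real.exp 1) ^ k := by ring
      _ = (2 * (sX * Real.sqrt k)) * (Q * (((m:ℝ) / Real.exp 1) ^ m * ((b:ℝ) / Real.exp 1) ^ b)) := by
          rw [s2, s3]
      _ = (Real.sqrt (2 * (m:ℝ)) * Real.sqrt (2 * (b:ℝ))) *
          (Q * (((m:ℝ) / Real.exp 1) ^ m * ((b:ℝ) / Real.exp 1) ^ b)) := by rw [s1]
      _ = Q * (Real.sqrt (2 * (m:ℝ)) * ((m:ℝ) / Real.exp 1) ^ m *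
            (Real.sqrt (2 * (b:ℝ)) * ((b:ℝ) / Real.exp 1) ^ b)) := by ring
  have hC : (k.choose m : ℝ) * (A * B) * (Real.sqrt 2 * sX) = K * Q := by
    have hmul := congrArg (· * (Real.sqrt 2 * sX)) hfac2
    rw [mul_assoc (K) (Fk) _] at hmul
    rw [e2] at hmul
    have : ((k.choose m : ℝ) * (A * B) * (Real.sqrt 2 * sX)) * (Fa * Fb)
        = (K * Q) * (Fa * Fb) := by
      linear_combination hmul
    exact mul_right_cancel₀ (by positivity) this
  have hklow := key_lower m b hm1 hb1
  have hkup := key_upper m b hm1 hb1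
  rw [← hkab] at hklow hkup
  constructor
  · -- lower bound
    rw [hQ]
    have e3 : Real.sqrt (8 * p * (1 - p) * (k:ℝ)) = 2 * (Real.sqrt 2 * sX) := by
      rw [show 8 * p * (1-p) * (k:ℝ) = 2^2 * (2 * (p * (1-p) * k)) by ring,
        Real.sqrt_mul (by positivity), Real.sqrt_sq (by norm_num),
        Real.sqrt_mul (by norm_num), hsX]
    rw [e3, div_le_iff₀ (by positivity)]
    have h1 : ((k.choose m : ℝ) * (Real.sqrt 2 * sX)) * (A * B) = K * Q := by
      linear_combination hC
    have hy : (0:ℝ) ≤ (k.choose m : ℝ) * (Real.sqrt 2 * sX) := by positivity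
    have h3 : K * Q ≤ K * ((k.choose m : ℝ) * (2 * (Real.sqrt 2 * sX))) := by
      calc K * Q = ((k.choose m : ℝ) * (Real.sqrt 2 * sX)) * (A * B) := h1.symm
        _ ≤ ((k.choose m : ℝ) * (Real.sqrt 2 * sX)) * (2 * K) :=
            mul_le_mul_of_nonneg_left hklow hy
        _ = K * ((k.choose m : ℝ) * (2 * (Real.sqrt 2 * sX))) := by ring
    exact le_of_mul_le_mul_left h3 hKpos
  · -- upper bound
    rw [hQ]
    have e4 : Real.sqrt (2 * π * p * (1 - p) * (k:ℝ))
        = Real.sqrt 2 * (Real.sqrt π * sX) := by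
      rw [show 2 * π * p * (1-p) * (k:ℝ) = 2 * (π * (p * (1-p) * k)) by ring,
        Real.sqrt_mul (by norm_num), Real.sqrt_mul Real.pi_pos.le, hsX]
    rw [e4, le_div_iff₀ (by positivity)]
    have h1 : ((k.choose m : ℝ) * (Real.sqrt 2 * sX)) * (A * B) = K * Q := by
      linear_combination hC
    apply le_of_mul_le_mul_right _ (mul_pos hApos hBpos)
    calc (k.choose m : ℝ) * (Real.sqrt 2 * (Real.sqrt π * sX)) * (A * B)
        = Real.sqrt π * (((k.choose m : ℝ) * (Real.sqrt 2 * sX)) * (A * B)) := by ring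
      _ = Real.sqrt π * (K * Q) := by rw [h1]
      _ = (Real.sqrt π * K) * Q := by ring
      _ ≤ (A * B) * Q := mul_le_mul_of_nonneg_right hkup hQpos.le
      _ = Q * (A * B) := by ring

end AshAux
end

section
/- In a parity game, if μ is a mapping from vertices to tuples of non-negative integers (or to bounded adaptive multi-counters) such that every edge on a simple cycle v₁, v₂, …, v_k is progressive in μ, then the highest vertex priority occurring on that cycle is even. -/
/-- The `p`-truncation of a tuple of non-negative integers indexed by the odd
priorities `d−1, d−3, …, 1` (in decreasing order): keep only the components for
odd priorities `≥ p`, i.e. the first `(d + 1 − p)/2` components. -/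
def trunc (d p : ℕ) (t : List ℕ) : List ℕ := t.take ((d + 1 - p) / 2)

/-- Strict lexicographic order on tuples, in which a proper prefix is strictly smaller. -/
def nlex : List ℕ → List ℕ → Prop := List.Lex (· < ·)

/-- An edge `(v, u)` is progressive in `μ` if `μ(v)|_{π(v)} ≥ μ(u)|_{π(v)}`,
with strict inequality when `π(v)` is odd. -/
def Progressive {V : Type*} (d : ℕ) (π : V → ℕ) (μ : V → List ℕ) (v u : V) : Prop :=
  (trunc d (π v) (μ u) = trunc d (π v) (μ v) ∨
    nlex (trunc d (π v) (μ u)) (trunc d (π v) (μ v))) ∧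
  (Odd (π v) → nlex (trunc d (π v) (μ u)) (trunc d (π v) (μ v)))

/-- Taking a prefix preserves weak lexicographic order. -/
theorem lex_take (m : ℕ) : ∀ {a b : List ℕ}, List.Lex (· < ·) a b →
    a.take m = b.take m ∨ List.Lex (· < ·) (a.take m) (b.take m) := by
  intro a b h
  induction h generalizing m with
  | nil =>
    cases m with
    | zero => left; rfl
    | succ m => right; exact List.Lex.nil
  | @cons x l₁ l₂ h ih =>
    cases m with
    | zero => left; rfl
    | succ m =>
      rcases ih (m := m) with h' | h'
      · left; simp [List.take, h']
      · right; exact List.Lex.cons h'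
  | @rel x l₁ y l₂ h =>
    cases m with
    | zero => left; rfl
    | succ m => right; exact List.Lex.rel h

theorem nlex_trans {a b c : List ℕ} (h1 : nlex a b) (h2 : nlex b c) : nlex a c :=
  List.lex_trans (fun h₁ h₂ => Nat.lt_trans h₁ h₂) h1 h2

theorem nlex_irrefl (a : List ℕ) : ¬ nlex a a := _root_.irrefl (r := List.Lex (· < ·)) a

/-- If every edge on a simple cycle `c 0, c 1, …, c (k−1)` in a parity game graph is
progressive in `μ`, then the highest vertex priority occurring on the cycle is even. -/
theorem progressive_cycle_even {V : Type*} (d : ℕ) (π : V → ℕ) (E : V → V → Prop)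
    (μ : V → List ℕ) (hπ : ∀ v, 1 ≤ π v ∧ π v ≤ d)
    (k : ℕ) (hk : 0 < k) (c : ℕ → V) (hinj : Set.InjOn c (Set.Iio k))
    (hE : ∀ i < k, E (c i) (c ((i + 1) % k)))
    (hprog : ∀ i < k, Progressive d π μ (c i) (c ((i + 1) % k))) :
    Even ((Finset.range k).sup fun i => π (c i)) := by
  by_contra hodd
  rw [Nat.not_even_iff_odd] at hodd
  set p := (Finset.range k).sup fun i => π (c i) with hp
  -- there is a vertex attaining the sup
  obtain ⟨i₀, hi₀mem, hi₀⟩ := Finset.exists_mem_eq_sup (Finset.range k)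
    ⟨0, Finset.mem_range.mpr hk⟩ (fun i => π (c i))
  rw [Finset.mem_range] at hi₀mem
  set T : V → List ℕ := fun v => trunc d p (μ v) with hT
  -- key: truncation at p of trunc at π(c i) is trunc at p
  have hle : ∀ i < k, π (c i) ≤ p := fun i hi =>
    Finset.le_sup (f := fun i => π (c i)) (Finset.mem_range.mpr hi)
  have htr : ∀ i < k, ∀ t : List ℕ,
      (trunc d (π (c i)) t).take ((d + 1 - p) / 2) = trunc d p t := by
    intro i hi t
    have h1 : (d + 1 - p) / 2 ≤ (d + 1 - π (c i)) / 2 :=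
      Nat.div_le_div_right (Nat.sub_le_sub_left (hle i hi) _)
    simp [trunc, List.take_take, Nat.min_eq_left h1]
  -- step lemma
  have hstep : ∀ j : ℕ, T (c ((j + 1) % k)) = T (c (j % k)) ∨
      nlex (T (c ((j + 1) % k))) (T (c (j % k))) := by
    intro j
    have hjk : j % k < k := Nat.mod_lt _ hk
    have hmod : (j % k + 1) % k = (j + 1) % k := Nat.mod_add_mod j k 1
    obtain ⟨hw, _⟩ := hprog (j % k) hjk
    rw [hmod] at hw
    rcases hw with h | h
    · left
      have := congrArg (fun l => l.take ((d + 1 - p) / 2)) h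
      simpa [htr (j % k) hjk] using this
    · rcases lex_take ((d + 1 - p) / 2) h with h' | h'
      · left; rw [htr (j % k) hjk, htr (j % k) hjk] at h'; exact h'
      · right; rw [htr (j % k) hjk, htr (j % k) hjk] at h'; exact h'
  -- strict step at i₀
  have hbase : nlex (T (c ((i₀ + 1) % k))) (T (c i₀)) := by
    obtain ⟨_, hs⟩ := hprog i₀ hi₀mem
    have hpe : π (c i₀) = p := hi₀.symm
    have := hs (by rw [hpe]; exact hodd)
    rwa [hpe] at this
  -- propagate strictness around the cycle
  have hchain : ∀ n : ℕ, nlex (T (c ((i₀ + 1 + n) % k))) (T (c i₀)) := by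
    intro n
    induction n with
    | zero => simpa using hbase
    | succ n ih =>
      have := hstep (i₀ + 1 + n)
      have heq : i₀ + 1 + (n + 1) = (i₀ + 1 + n) + 1 := by ring
      rw [heq]
      rcases this with h | h
      · rwa [h]
      · exact nlex_trans h ih
  have hfin := hchain (k - 1)
  have : (i₀ + 1 + (k - 1)) % k = i₀ := by
    have : i₀ + 1 + (k - 1) = i₀ + k := by omega
    rw [this, Nat.add_mod_right]
    exact Nat.mod_eq_of_lt hi₀mem
  rw [this] at hfin
  exact nlex_irrefl _ hfin
end

section
/- Let L be a finite complete lattice and F a finite family of inflationary monotone operators on L. Then from any starting element μ ∈ L, every maximal sequence obtained by repeatedly applying operators from F that strictly increase the current element terminates, and it terminates at the least simultaneous fixed point of all operators in F that is greater than or equal to μ. -/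
/-- In a finite complete lattice `L`, given a finite family `f : ι → L → L` of
inflationary monotone operators and a starting element `μ`:
(1) there is no infinite sequence of strictly increasing applications of operators
from the family starting at `μ` (so every maximal sequence terminates), and
(2) every maximal sequence (one that ends at an element no operator strictly
increases) terminates at the least simultaneous fixed point of the family that is
greater than or equal to `μ`. -/
theorem lifting_fixed_point {L : Type*} [Fintype L] [CompleteLattice L]
    {ι : Type*} [Finite ι] (f : ι → L → L)
    (hinfl : ∀ i x, x ≤ f i x) (hmono : ∀ i, Monotone (f i)) (μ : L) :
    (¬ ∃ x : ℕ → L, x 0 = μ ∧ ∀ k, ∃ i, x (k + 1) = f i (x k) ∧ x k < x (k + 1)) ∧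
    (∀ (n : ℕ) (x : ℕ → L), x 0 = μ →
      (∀ k < n, ∃ i, x (k + 1) = f i (x k) ∧ x k < x (k + 1)) →
      (∀ i, ¬ x n < f i (x n)) →
      IsLeast {y | μ ≤ y ∧ ∀ i, f i y = y} (x n)) := by
  constructor
  · rintro ⟨x, -, hx⟩
    have hsm : StrictMono x := strictMono_nat_of_lt_succ fun k => (hx k).choose_spec.2
    exact Set.not_injOn_infinite_finite_image (Set.infinite_univ)
      (Set.toFinite _) (hsm.injective.injOn)
  · intro n x hx0 hstep hmax
    have hmem : μ ≤ x n ∧ ∀ i, f i (x n) = x n := by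
      constructor
      · have : ∀ k ≤ n, μ ≤ x k := by
          intro k hk
          induction k with
          | zero => exact hx0.ge
          | succ m ih =>
            obtain ⟨i, hi, hlt⟩ := hstep m (Nat.lt_of_succ_le hk)
            exact (ih (Nat.le_of_succ_le hk)).trans hlt.le
        exact this n le_rfl
      · intro i
        exact ((hinfl i (x n)).lt_or_eq.resolve_left (hmax i)).symm
    refine ⟨hmem, fun y hy => ?_⟩
    have : ∀ k ≤ n, x k ≤ y := by
      intro k hk
      induction k with
      | zero => exact hx0 ▸ hy.1
      | succ m ih =>
        obtain ⟨i, hi, -⟩ := hstep m (Nat.lt_of_succ_le hk)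
        rw [hi]
        calc f i (x m) ≤ f i y := hmono i (ih (Nat.le_of_succ_le hk))
        _ = y := hy.2 i
    exact this n le_rfl
end

section
/- The pointwise order on the set of all functions from a finite set V to a finite linear order S (with a top element) forms a complete lattice, and for each v ∈ V the lifting operator Lift_v — which changes only the value at v, replacing it by the min (if Even owns v) or max (if Odd owns v) over outgoing edges (v,w) of lift(μ,v,w), where lift(μ,v,w) is the least σ ≥ μ(v) making edge (v,w) progressive in μ[v↦σ] — is inflationary and monotone. -/
/-- Progressivity of a pair of values w.r.t. priority `p`, in a linearly ordered set
of values `S` with top element `⊤` and truncation operations `trunc p`: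
`σ|_p ≥ τ|_p`, strictly when `p` is odd, except that a pair at `⊤` always counts as
progressive. -/
def ProgPair {S : Type*} [LinearOrder S] [OrderTop S] (trunc : ℕ → S → S)
    (σ τ : S) (p : ℕ) : Prop :=
  trunc p τ ≤ trunc p σ ∧ (Odd p → trunc p τ < trunc p σ ∨ (σ = ⊤ ∧ τ = ⊤))

/-- The set of mappings `V → S` from the (finite) vertex set of a parity game to the
finite linear order `S = S^⊤_{η,d}` of bounded adaptive multi-counters with a top
element, ordered pointwise, is a complete lattice; and each lifting operator
`Lift_v` — which changes only the value at `v`, replacing it by the min (if Even owns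
`v`) or the max (if Odd owns `v`), over outgoing edges `(v,w)`, of `lift(μ,v,w)`,
the least `σ ≥ μ(v)` making `(v,w)` progressive in `μ[v↦σ]` — is inflationary
and monotone. -/
theorem complete_lattice_and_lift_inflationary_monotone
    {V S : Type*} [Fintype V] [DecidableEq V] [Fintype S] [LinearOrder S] [BoundedOrder S]
    (E : V → V → Prop) (owner : V → Bool) (π : V → ℕ)
    (hE : ∀ v, ∃ w, E v w)
    (trunc : ℕ → S → S)
    (htrMono : ∀ p, Monotone (trunc p))
    (htrTop : ∀ p, trunc p ⊤ = ⊤)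
    (htrTopIff : ∀ p σ, trunc p σ = ⊤ → σ = ⊤)
    (lft : (V → S) → V → V → S)
    (hlft : ∀ (μ : V → S) (v w : V),
      IsLeast {σ : S | μ v ≤ σ ∧
        ProgPair trunc σ (Function.update μ v σ w) (π v)} (lft μ v w))
    (LiftOp : V → (V → S) → (V → S))
    (hLiftOff : ∀ v (μ : V → S) (u : V), u ≠ v → LiftOp v μ u = μ u)
    (hLiftEven : ∀ v (μ : V → S), owner v = true →
      IsLeast {s : S | ∃ w, E v w ∧ s = lft μ v w} (LiftOp v μ v))
    (hLiftOdd : ∀ v (μ : V → S), owner v = false →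
      IsGreatest {s : S | ∃ w, E v w ∧ s = lft μ v w} (LiftOp v μ v)) :
    (∃ inst : CompleteLattice (V → S),
      ∀ μ ν : V → S, inst.le μ ν ↔ ∀ u, μ u ≤ ν u) ∧
    (∀ v (μ : V → S), μ ≤ LiftOp v μ) ∧
    (∀ v, Monotone (LiftOp v)) := by
  -- key lemma: lft is monotone in μ
  have hlftMono : ∀ (μ ν : V → S), μ ≤ ν → ∀ v w, lft μ v w ≤ lft ν v w := by
    intro μ ν hμν v w
    refine (hlft μ v w).2 ?_
    have hν := (hlft ν v w).1
    obtain ⟨hle, hfst, hodd⟩ : ν v ≤ lft ν v w ∧ _ ∧ _ := ⟨hν.1, hν.2.1, hν.2.2⟩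
    set σ := lft ν v w with hσ
    have hupd : Function.update μ v σ w ≤ Function.update ν v σ w := by
      by_cases hw : w = v
      · subst hw; simp
      · simp only [Function.update_of_ne hw]; exact hμν w
    refine ⟨le_trans (hμν v) hle, ?_, ?_⟩
    · exact le_trans (htrMono _ hupd) hfst
    · intro hop
      rcases hodd hop with h | ⟨hσt, hτt⟩
      · exact Or.inl (lt_of_le_of_lt (htrMono _ hupd) h)
      · by_cases hμw : Function.update μ v σ w = ⊤
        · exact Or.inr ⟨hσt, hμw⟩
        · left
          have h1 : trunc (π v) (Function.update μ v σ w) ≠ ⊤ :=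
            fun h => hμw (htrTopIff _ _ h)
          have h2 : trunc (π v) σ = ⊤ := by rw [hσt]; exact htrTop _
          rw [h2]; exact lt_top_iff_ne_top.mpr h1
  letI : CompleteLinearOrder S := Fintype.toCompleteLinearOrder S
  refine ⟨⟨Pi.instCompleteLattice, fun μ ν => Iff.rfl⟩, ?_, ?_⟩
  · -- inflationary
    intro v μ u
    by_cases hu : u = v
    · subst hu
      cases how : owner u with
      | true =>
        obtain ⟨w, hw, heq⟩ := (hLiftEven u μ how).1
        rw [heq]; exact (hlft μ u w).1.1
      | false =>
        obtain ⟨w, hw, heq⟩ := (hLiftOdd u μ how).1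
        rw [heq]; exact (hlft μ u w).1.1
    · rw [hLiftOff v μ u hu]
  · -- monotone
    intro v μ ν hμν u
    by_cases hu : u = v
    · subst hu
      cases how : owner u with
      | true =>
        obtain ⟨w, hw, heq⟩ := (hLiftEven u ν how).1
        calc LiftOp u μ u ≤ lft μ u w := (hLiftEven u μ how).2 ⟨w, hw, rfl⟩
          _ ≤ lft ν u w := hlftMono μ ν hμν u w
          _ = LiftOp u ν u := heq.symm
      | false =>
        obtain ⟨w, hw, heq⟩ := (hLiftOdd u μ how).1
        calc LiftOp u μ u = lft μ u w := heq
          _ ≤ lft ν u w := hlftMono μ ν hμν u w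
          _ ≤ LiftOp u ν u := (hLiftOdd u ν how).2 ⟨w, hw, rfl⟩
    · rw [hLiftOff v μ u hu, hLiftOff v ν u hu]; exact hμν u
end
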